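/- Let n ≥ 1, p ∈ ℝ with p ≠ 0, let a be a symmetric n×n real matrix, and let x ∈ ℝⁿ with xᵢ > 0 for all i and Σᵢ xᵢ = 1. Set G_p(x) := (Σᵢ xᵢᵖ)^{1/p}, πᵢ := xᵢᵖ / Σₖ xₖᵖ, and τᵢⱼ := (x − eᵢ)ᵀ a (x − eⱼ), where eᵢ is the i-th standard unit vector. Then the drift quantity g := −(1/(2 G_p(x))) Σᵢ Σⱼ (∂² G_p/∂xᵢ∂xⱼ)(x) · xᵢ xⱼ τᵢⱼ equals (1 − p) γ*_π(a), where γ*_π(a) := (1/2)(Σᵢ πᵢ aᵢᵢ − Σᵢ Σⱼ πᵢ aᵢⱼ πⱼ). -/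

import Mathlib

open Finset Matrix Real

lemma drift_eval_single {n : ℕ} (c : Fin n → ℝ) (j : Fin n) :
    (∑ i, c i • (ContinuousLinearMap.proj i : (∀ _ : Fin n, ℝ) →L[ℝ] ℝ)) (Pi.single j 1) = c j := by
  simp [ContinuousLinearMap.sum_apply, Pi.single_apply, Finset.sum_ite_eq']

lemma drift_aux1 {n : ℕ} {p : ℝ} (hp : p ≠ 0) {y : Fin n → ℝ} (hy : ∀ i, 0 < y i)
    (hS : (∑ i, y i ^ p) ≠ 0) :
    HasFDerivAt (fun z : Fin n → ℝ => (∑ i, z i ^ p) ^ (1 / p))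
      (∑ i, (((∑ k, y k ^ p) ^ (1 / p - 1)) * y i ^ (p - 1)) •
        (ContinuousLinearMap.proj i : (∀ _ : Fin n, ℝ) →L[ℝ] ℝ)) y := by
  have hS' : HasFDerivAt (fun z : Fin n → ℝ => ∑ i, z i ^ p)
      (∑ i, (p * y i ^ (p - 1)) • (ContinuousLinearMap.proj i : (∀ _ : Fin n, ℝ) →L[ℝ] ℝ)) y :=
    HasFDerivAt.fun_sum fun i _ => (hasFDerivAt_apply i y).rpow_const (Or.inl (hy i).ne')
  have h2 := hS'.rpow_const (p := 1/p) (Or.inl hS)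
  refine h2.congr_fderiv (Eq.symm ?_)
  rw [Finset.smul_sum]
  refine Finset.sum_congr rfl fun i _ => ?_
  rw [smul_smul]
  congr 1
  field_simp

lemma drift_aux2 {n : ℕ} {p : ℝ} {x : Fin n → ℝ} (hx : ∀ i, 0 < x i)
    (hS : (∑ i, x i ^ p) ≠ 0) (j : Fin n) :
    HasFDerivAt (fun z : Fin n → ℝ => (∑ k, z k ^ p) ^ (1 / p - 1) * z j ^ (p - 1))
      (((∑ k, x k ^ p) ^ (1 / p - 1)) • (((p - 1) * x j ^ (p - 2)) •
          (ContinuousLinearMap.proj j : (∀ _ : Fin n, ℝ) →L[ℝ] ℝ)) +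
        (x j ^ (p - 1)) • (((1 / p - 1) * (∑ k, x k ^ p) ^ (1 / p - 2)) •
          (∑ i, (p * x i ^ (p - 1)) • (ContinuousLinearMap.proj i : (∀ _ : Fin n, ℝ) →L[ℝ] ℝ)))) x := by
  have hS' : HasFDerivAt (fun z : Fin n → ℝ => ∑ i, z i ^ p)
      (∑ i, (p * x i ^ (p - 1)) • (ContinuousLinearMap.proj i : (∀ _ : Fin n, ℝ) →L[ℝ] ℝ)) x :=
    HasFDerivAt.fun_sum fun i _ => (hasFDerivAt_apply i x).rpow_const (Or.inl (hx i).ne')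
  have hf := hS'.rpow_const (p := 1/p - 1) (Or.inl hS)
  have hg := (hasFDerivAt_apply j x).rpow_const (p := p - 1) (Or.inl (hx j).ne')
  have h3 := hf.mul hg
  rw [show p - 1 - 1 = p - 2 by ring, show 1 / p - 1 - 1 = 1 / p - 2 by ring] at h3
  exact h3

lemma drift_key {n : ℕ} {p : ℝ} (hp : p ≠ 0) {x : Fin n → ℝ} (hx : ∀ i, 0 < x i)
    (hS : (0:ℝ) < ∑ k, x k ^ p) (i j : Fin n) :
    fderiv ℝ (fun y => fderiv ℝ (fun z : Fin n → ℝ => (∑ k, z k ^ p) ^ (1 / p)) y (Pi.single j 1))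
        x (Pi.single i 1)
      = (1 - p) * (∑ k, x k ^ p) ^ (1 / p - 2) * x i ^ (p - 1) * x j ^ (p - 1)
        + (if j = i then (p - 1) * (∑ k, x k ^ p) ^ (1 / p - 1) * x j ^ (p - 2) else 0) := by
  have hU : IsOpen {y : Fin n → ℝ | ∀ k, 0 < y k} := by
    have : {y : Fin n → ℝ | ∀ k, 0 < y k} = ⋂ k, {y | 0 < y k} := by
      ext y; simp [Set.mem_iInter]
    rw [this]
    exact isOpen_iInter_of_finite fun k => isOpen_lt continuous_const (continuous_apply k)
  have hEq : (fun y => fderiv ℝ (fun z : Fin n → ℝ => (∑ k, z k ^ p) ^ (1 / p)) y (Pi.single j 1))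
      =ᶠ[nhds x] (fun y => (∑ k, y k ^ p) ^ (1 / p - 1) * y j ^ (p - 1)) := by
    filter_upwards [hU.mem_nhds hx] with y hy
    have hne : Nonempty (Fin n) := by
      by_contra h
      rw [not_nonempty_iff] at h
      simp [Finset.univ_eq_empty] at hS
    have hSy : (∑ k, y k ^ p) ≠ 0 :=
      (Finset.sum_pos (fun k _ => Real.rpow_pos_of_pos (hy k) p) Finset.univ_nonempty).ne'
    rw [(drift_aux1 hp hy hSy).fderiv, drift_eval_single]
  rw [hEq.fderiv_eq, (drift_aux2 hx hS.ne' j).fderiv]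
  simp only [ContinuousLinearMap.add_apply, ContinuousLinearMap.smul_apply,
    ContinuousLinearMap.proj_apply, ContinuousLinearMap.sum_apply, Pi.single_apply,
    smul_eq_mul, mul_ite, mul_one, mul_zero]
  rw [Finset.sum_ite_eq' univ i fun k => p * x k ^ (p - 1)]
  simp only [mem_univ, if_true]
  split_ifs with h
  · field_simp; ring
  · field_simp; ring

theorem diversity_drift_identity
    (n : ℕ) (hn : 1 ≤ n) (p : ℝ) (hp : p ≠ 0)
    (a : Matrix (Fin n) (Fin n) ℝ) (hsym : a.IsSymm)
    (x : Fin n → ℝ) (hx : ∀ i, 0 < x i) (hsum : ∑ i, x i = 1)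
    (Gp : (Fin n → ℝ) → ℝ) (hGp : Gp = fun y => (∑ i, y i ^ p) ^ (1 / p))
    (w : Fin n → ℝ) (hw : w = fun i => x i ^ p / ∑ k, x k ^ p)
    (τ : Fin n → Fin n → ℝ)
    (hτ : τ = fun i j => (x - Pi.single i 1) ⬝ᵥ a.mulVec (x - Pi.single j 1)) :
    -(1 / (2 * Gp x)) *
        (∑ i, ∑ j,
          (fderiv ℝ (fun y => fderiv ℝ Gp y (Pi.single j 1)) x (Pi.single i 1)) *
            (x i * x j * τ i j)) =
      (1 - p) * ((1 / 2) * (∑ i, w i * a i i - ∑ i, ∑ j, w i * a i j * w j)) := by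
  subst hGp hw
  have hne : Nonempty (Fin n) := ⟨⟨0, hn⟩⟩
  set S : ℝ := ∑ k, x k ^ p with hSdef
  have hSpos : 0 < S := Finset.sum_pos (fun k _ => Real.rpow_pos_of_pos (hx k) p) univ_nonempty
  have hSne : S ≠ 0 := hSpos.ne'
  -- pointwise second derivative values
  simp only [drift_key hp hx hSpos]
  -- powers
  have hxp : ∀ i, x i ^ (p - 1) * x i = x i ^ p := fun i => by
    rw [← Real.rpow_add_one (hx i).ne' (p - 1), sub_add_cancel]
  have hxp3 : ∀ i, x i ^ (p - 2) * x i = x i ^ (p - 1) := fun i => by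
    rw [← Real.rpow_add_one (hx i).ne' (p - 2), show p - 2 + 1 = p - 1 by ring]
  have hterm : ∀ i j : Fin n,
      ((1 - p) * S ^ (1 / p - 2) * x i ^ (p - 1) * x j ^ (p - 1)
          + (if j = i then (p - 1) * S ^ (1 / p - 1) * x j ^ (p - 2) else 0))
        * (x i * x j * τ i j)
      = (1 - p) * S ^ (1 / p - 2) * (x i ^ p * x j ^ p * τ i j)
        + (if j = i then (p - 1) * S ^ (1 / p - 1) * (x j ^ p * τ i j) else 0) := by
    intro i j
    split_ifs with h
    · subst h
      rw [← hxp j, ← hxp3 j]; ring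
    · rw [← hxp i, ← hxp j]; ring
  rw [← hSdef]
  simp only [hterm]
  rw [show (∑ i, ∑ j, ((1 - p) * S ^ (1 / p - 2) * (x i ^ p * x j ^ p * τ i j)
        + (if j = i then (p - 1) * S ^ (1 / p - 1) * (x j ^ p * τ i j) else 0)))
      = (1 - p) * S ^ (1 / p - 2) * (∑ i, ∑ j, x i ^ p * x j ^ p * τ i j)
        + (p - 1) * S ^ (1 / p - 1) * (∑ i, x i ^ p * τ i i) by
    simp only [Finset.sum_add_distrib]
    congr 1
    · rw [Finset.mul_sum]
      refine Finset.sum_congr rfl fun i _ => ?_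
      rw [Finset.mul_sum]
    · rw [Finset.mul_sum]
      refine Finset.sum_congr rfl fun i _ => ?_
      rw [Finset.sum_ite_eq' univ i fun j => (p - 1) * S ^ (1 / p - 1) * (x j ^ p * τ i j)]
      simp]
  -- the tau -> a identity
  set r : Fin n → ℝ := fun i => ∑ l, a i l * x l with hrdef
  set Q : ℝ := ∑ k, x k * r k with hQdef
  have hr : ∀ j, (∑ k, x k * a k j) = r j := by
    intro j
    rw [hrdef]
    refine Finset.sum_congr rfl fun k _ => ?_
    rw [hsym.apply, mul_comm]
  have hτ' : ∀ i j, τ i j = Q - r j - r i + a i j := by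
    intro i j
    rw [hτ]
    have inner : ∀ k, a.mulVec (x - Pi.single j 1) k = r k - a k j := by
      intro k
      simp [Matrix.mulVec, dotProduct, mul_sub, Finset.sum_sub_distrib, Pi.single_apply,
        mul_ite, Finset.sum_ite_eq', hrdef]
    simp only [dotProduct, Pi.sub_apply, inner]
    have expand : ∀ k, (x k - (Pi.single i 1 : Fin n → ℝ) k) * (r k - a k j)
        = x k * r k - x k * a k j - (Pi.single i 1 : Fin n → ℝ) k * (r k - a k j) := by
      intro k; ring
    simp only [expand]
    rw [Finset.sum_sub_distrib, Finset.sum_sub_distrib, hr]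
    have : ∑ k, (Pi.single i 1 : Fin n → ℝ) k * (r k - a k j) = r i - a i j := by
      simp [Pi.single_apply, ite_mul, Finset.sum_ite_eq']
    rw [this, ← hQdef]
    ring
  have hwsum : ∑ i, x i ^ p / S = 1 := by
    rw [← Finset.sum_div, ← hSdef, div_self hSne]
  set W : Fin n → ℝ := fun i => x i ^ p / S with hWdef
  have hWsum : ∑ i, W i = 1 := hwsum
  set R : ℝ := ∑ i, W i * r i with hRdef
  have h1 : ∑ j, W j * τ j j = Q - 2 * R + ∑ j, W j * a j j := by
    simp only [hτ', mul_sub, mul_add]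
    rw [Finset.sum_add_distrib, Finset.sum_sub_distrib, Finset.sum_sub_distrib,
      ← Finset.sum_mul, hWsum, ← hRdef]
    ring
  have h2 : ∑ i, ∑ j, W i * W j * τ i j = Q - 2 * R + ∑ i, ∑ j, W i * a i j * W j := by
    have inner2 : ∀ i, ∑ j, W i * W j * τ i j
        = W i * Q - W i * R - W i * r i + ∑ j, W i * a i j * W j := by
      intro i
      have : ∀ j, W i * W j * τ i j
          = W i * (W j * Q) - W i * (W j * r j) - W i * (W j * r i) + W i * a i j * W j := by
        intro j; rw [hτ']; ring
      simp only [this]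
      have sQ : ∑ j, W i * (W j * Q) = W i * Q := by
        rw [← Finset.mul_sum, ← Finset.sum_mul, hWsum, one_mul]
      have sR : ∑ j, W i * (W j * r j) = W i * R := by
        rw [← Finset.mul_sum, hRdef]
      have sr : ∑ j, W i * (W j * r i) = W i * r i := by
        rw [← Finset.mul_sum, ← Finset.sum_mul, hWsum, one_mul]
      rw [Finset.sum_add_distrib, Finset.sum_sub_distrib, Finset.sum_sub_distrib, sQ, sR, sr]
    simp only [inner2]
    have t1 : ∑ i, W i * Q = Q := by rw [← Finset.sum_mul, hWsum, one_mul]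
    have t2 : ∑ i, W i * R = R := by rw [← Finset.sum_mul, hWsum, one_mul]
    rw [Finset.sum_add_distrib, Finset.sum_sub_distrib, Finset.sum_sub_distrib, t1, t2, ← hRdef]
    ring
  have main2 : ∑ j, W j * τ j j - ∑ i, ∑ j, W i * W j * τ i j
      = ∑ i, W i * a i i - ∑ i, ∑ j, W i * a i j * W j := by
    rw [h1, h2]; ring
  -- relate raw sums to W sums
  have hA : ∑ i, ∑ j, x i ^ p * x j ^ p * τ i j = (S * S) * ∑ i, ∑ j, W i * W j * τ i j := by
    rw [Finset.mul_sum]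
    refine Finset.sum_congr rfl fun i _ => ?_
    rw [Finset.mul_sum]
    refine Finset.sum_congr rfl fun j _ => ?_
    rw [hWdef]
    field_simp
  have hB : ∑ i, x i ^ p * τ i i = S * ∑ i, W i * τ i i := by
    rw [Finset.mul_sum]
    refine Finset.sum_congr rfl fun i _ => ?_
    rw [hWdef]
    field_simp
  rw [hA, hB]
  -- rpow arithmetic
  have e1 : S ^ (1 / p - 1) = S ^ (1 / p) / S := by
    rw [Real.rpow_sub hSpos, Real.rpow_one]
  have e2 : S ^ (1 / p - 2) = S ^ (1 / p) / (S * S) := by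
    rw [Real.rpow_sub hSpos, show (2:ℝ) = 1 + 1 by norm_num, Real.rpow_add hSpos, Real.rpow_one]
  have hc : S ^ (1 / p) ≠ 0 := (Real.rpow_pos_of_pos hSpos _).ne'
  simp only [hWdef] at main2 ⊢
  rw [e1, e2, ← main2]
  field_simp
  ring
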